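/- Let Γ be the generalized subspace quiver with sink v₀, sources v_{ij} (1 ≤ i ≤ m, 1 ≤ j ≤ r_i), and w_{ij} arrows v_{ij} → v₀, over an algebraically closed field K. If X is a balanced representation of Γ (i.e., for every i the map Ψ(X,i) = ⊕_{j,k} X(α_{ij}^k) : ⊕_{j=1}^{r_i} X_{ij}^{⊕ w_{ij}} → X₀ is invertible) and Y is a subrepresentation of X, then θ(dim Y) ≤ 0, where θ_{v₀} = -m and θ_{v_{ij}} = w_{ij}; moreover equality holds if and only if Y is itself balanced. -/
import Mathlib


open Finset Module

/-- A representation of the generalized subspace quiver (given by its vertex spaces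
`X0`, `X i j` and arrow maps `f i j k : X i j →ₗ X0`) is balanced if for every cluster `i`
the combined map `Ψ(X,i)` from the direct sum of the sources of cluster `i` to `X0` is
bijective. -/
def IsBalancedRep (K : Type*) [Field K] {m : ℕ} {r : Fin m → ℕ} (w : ∀ i, Fin (r i) → ℕ)
    {X0 : Type*} [AddCommGroup X0] [Module K X0]
    {X : ∀ i, Fin (r i) → Type*} [∀ i j, AddCommGroup (X i j)] [∀ i j, Module K (X i j)]
    (f : ∀ i j, Fin (w i j) → (X i j →ₗ[K] X0)) : Prop :=
  ∀ i, Function.Bijective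
    (fun g : (j : Fin (r i)) → Fin (w i j) → X i j => ∑ j, ∑ k, f i j k (g j k))

section Aux

variable (K : Type*) [Field K] {m : ℕ} {r : Fin m → ℕ} {w : ∀ i, Fin (r i) → ℕ}
    {X0 : Type*} [AddCommGroup X0] [Module K X0]
    {X : ∀ i, Fin (r i) → Type*} [∀ i j, AddCommGroup (X i j)] [∀ i j, Module K (X i j)]
    (f : ∀ i j, Fin (w i j) → (X i j →ₗ[K] X0))

/-- The bundled linear map `Ψ(X,i)`. -/
def PsiMap (i : Fin m) : ((j : Fin (r i)) → Fin (w i j) → X i j) →ₗ[K] X0 :=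
  LinearMap.lsum K _ K fun j => LinearMap.lsum K _ K fun k => f i j k

lemma PsiMap_apply (i : Fin m) (g : (j : Fin (r i)) → Fin (w i j) → X i j) :
    PsiMap K f i g = ∑ j, ∑ k, f i j k (g j k) := by
  simp [PsiMap]

lemma isBalancedRep_iff :
    IsBalancedRep K w f ↔ ∀ i, Function.Bijective (PsiMap K f i) := by
  have h : ∀ i, (fun g : (j : Fin (r i)) → Fin (w i j) → X i j => ∑ j, ∑ k, f i j k (g j k))
      = ⇑(PsiMap K f i) := by
    intro i; funext g; rw [PsiMap_apply]
  unfold IsBalancedRep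
  exact forall_congr' fun i => by rw [h i]

end Aux

/-- If `X` is a balanced representation and `Y` is a subrepresentation of `X`, then
`θ(dim Y) ≤ 0`, with equality if and only if `Y` is itself balanced. -/
theorem theta_subrep_nonpos (K : Type*) [Field K] [IsAlgClosed K]
    (m : ℕ) (r : Fin m → ℕ) (w : ∀ i, Fin (r i) → ℕ)
    (X0 : Type*) [AddCommGroup X0] [Module K X0] [FiniteDimensional K X0]
    (X : ∀ i, Fin (r i) → Type*) [∀ i j, AddCommGroup (X i j)] [∀ i j, Module K (X i j)]
    [∀ i j, FiniteDimensional K (X i j)]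
    (f : ∀ i j, Fin (w i j) → (X i j →ₗ[K] X0))
    (hX : IsBalancedRep K w f)
    (Y0 : Submodule K X0) (Y : ∀ i j, Submodule K (X i j))
    (hsub : ∀ i j k, ∀ x ∈ Y i j, f i j k x ∈ Y0) :
    -(m : ℤ) * (finrank K Y0 : ℤ) + ∑ i, ∑ j, (w i j : ℤ) * (finrank K (Y i j) : ℤ) ≤ 0 ∧
    (-(m : ℤ) * (finrank K Y0 : ℤ) + ∑ i, ∑ j, (w i j : ℤ) * (finrank K (Y i j) : ℤ) = 0 ↔
      IsBalancedRep K w (fun i j k => (f i j k).restrict (hsub i j k))) := by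
  classical
  set fY : ∀ i j, Fin (w i j) → (Y i j →ₗ[K] Y0) :=
    fun i j k => (f i j k).restrict (hsub i j k) with hfY
  -- the restricted Psi maps
  -- injectivity of restricted maps
  have hXbij := (isBalancedRep_iff K f).mp hX
  have key : ∀ i g, (PsiMap K fY i g : X0) = PsiMap K f i (fun j k => (g j k : X i j)) := by
    intro i g
    rw [PsiMap_apply, PsiMap_apply]
    push_cast
    rfl
  have hinj : ∀ i, Function.Injective (PsiMap K fY i) := by
    intro i g₁ g₂ hg
    have : PsiMap K f i (fun j k => (g₁ j k : X i j))
        = PsiMap K f i (fun j k => (g₂ j k : X i j)) := by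
      rw [← key, ← key, hg]
    have h2 := (hXbij i).injective this
    funext j k
    exact Subtype.ext (congrFun (congrFun h2 j) k)
  -- dimension of the domain of the restricted Psi map
  have hdom : ∀ i, finrank K ((j : Fin (r i)) → Fin (w i j) → (Y i j)) =
      ∑ j, w i j * finrank K (Y i j) := by
    intro i
    rw [Module.finrank_pi_fintype]
    refine Finset.sum_congr rfl fun j _ => ?_
    rw [Module.finrank_pi_fintype]
    simp [Finset.sum_const, mul_comm]
  -- per-cluster inequality
  have hle : ∀ i, ∑ j, w i j * finrank K (Y i j) ≤ finrank K Y0 := by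
    intro i
    rw [← hdom i]
    exact LinearMap.finrank_le_finrank_of_injective (hinj i)
  have hsum_le : ∑ i, ∑ j, (w i j : ℤ) * (finrank K (Y i j) : ℤ) ≤ (m : ℤ) * finrank K Y0 := by
    calc ∑ i, ∑ j, (w i j : ℤ) * (finrank K (Y i j) : ℤ)
        ≤ ∑ _i : Fin m, (finrank K Y0 : ℤ) := by
          refine Finset.sum_le_sum fun i _ => ?_
          exact_mod_cast hle i
      _ = (m : ℤ) * finrank K Y0 := by simp [mul_comm]
  constructor
  · linarith
  constructor
  · -- equality implies balanced
    intro heq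
    rw [isBalancedRep_iff K fY] at *
    -- show each summand equals finrank Y0
    have hall : ∀ i, (∑ j, (w i j : ℤ) * (finrank K (Y i j) : ℤ)) = (finrank K Y0 : ℤ) := by
      have hzero : ∑ i, ((finrank K Y0 : ℤ) - ∑ j, (w i j : ℤ) * (finrank K (Y i j) : ℤ)) = 0 := by
        rw [Finset.sum_sub_distrib]
        simp only [Finset.sum_const, Finset.card_univ, Fintype.card_fin, nsmul_eq_mul]
        linarith
      have hnonneg : ∀ i ∈ Finset.univ, (0:ℤ) ≤
          (finrank K Y0 : ℤ) - ∑ j, (w i j : ℤ) * (finrank K (Y i j) : ℤ) := by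
        intro i _
        have := hle i
        have : (∑ j, (w i j : ℤ) * (finrank K (Y i j) : ℤ)) ≤ (finrank K Y0 : ℤ) := by
          exact_mod_cast this
        linarith
      intro i
      have := (Finset.sum_eq_zero_iff_of_nonneg hnonneg).mp hzero i (Finset.mem_univ i)
      linarith
    intro i
    refine ⟨hinj i, ?_⟩
    have hdim : finrank K ((j : Fin (r i)) → Fin (w i j) → (Y i j)) = finrank K Y0 := by
      rw [hdom i]
      exact_mod_cast hall i
    have hrange : finrank K (LinearMap.range (PsiMap K fY i)) = finrank K Y0 := by
      rw [LinearMap.finrank_range_of_inj (hinj i), hdim]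
    have := Submodule.eq_top_of_finrank_eq hrange
    exact LinearMap.range_eq_top.mp this
  · -- balanced implies equality
    intro hbal
    rw [isBalancedRep_iff K fY] at hbal
    have hall : ∀ i, ∑ j, w i j * finrank K (Y i j) = finrank K Y0 := by
      intro i
      rw [← hdom i]
      exact (LinearEquiv.ofBijective (PsiMap K fY i) (hbal i)).finrank_eq
    have : ∑ i, ∑ j, (w i j : ℤ) * (finrank K (Y i j) : ℤ) = (m : ℤ) * finrank K Y0 := by
      calc ∑ i, ∑ j, (w i j : ℤ) * (finrank K (Y i j) : ℤ)
          = ∑ _i : Fin m, (finrank K Y0 : ℤ) := by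
            refine Finset.sum_congr rfl fun i _ => ?_
            exact_mod_cast hall i
        _ = (m : ℤ) * finrank K Y0 := by simp [mul_comm]
    linarith
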